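/- (Bachoc distance bound) Let Λ be a set of 2×2 complex matrices containing the zero matrix, let δ ≥ 0 be such that every nonzero X ∈ Λ satisfies |det(X)|^2 ≥ δ, and let d be a natural number. Let X_1, …, X_L ∈ Λ, not all zero, and suppose that either (i) for every i there exists Y_i ∈ Λ with X_i = (1+i)·Y_i (entrywise scalar multiple by the complex number 1+i), or (ii) there exist natural numbers w_1, …, w_L with Σ w_j ≥ d such that for each j: w_j = 0, or (w_j = 1 and |det(X_j)|^2 ≥ δ), or (w_j = 2 and |det(X_j)|^2 ≥ 2δ). Then |det(X_1X_1^* + … + X_LX_L^*)| ≥ min(4δ, d^2·δ/2). -/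

import Mathlib

open Matrix

def Good (B : Matrix (Fin 2) (Fin 2) ℂ) : Prop :=
  B 1 0 = (starRingEnd ℂ) (B 0 1) ∧ (B 0 0).im = 0 ∧ (B 1 1).im = 0 ∧
    0 ≤ (B 0 0).re ∧ 0 ≤ (B 1 1).re ∧
    Complex.normSq (B 0 1) ≤ (B 0 0).re * (B 1 1).re

lemma det_re_of {B : Matrix (Fin 2) (Fin 2) ℂ} (h10 : B 1 0 = (starRingEnd ℂ) (B 0 1))
    (him0 : (B 0 0).im = 0) (him1 : (B 1 1).im = 0) :
    B.det.re = (B 0 0).re * (B 1 1).re - Complex.normSq (B 0 1) := by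
  rw [Matrix.det_fin_two, h10, Complex.mul_conj]
  simp [Complex.mul_re, him0, him1]

lemma det_im_of {B : Matrix (Fin 2) (Fin 2) ℂ} (h10 : B 1 0 = (starRingEnd ℂ) (B 0 1))
    (him0 : (B 0 0).im = 0) (him1 : (B 1 1).im = 0) : B.det.im = 0 := by
  rw [Matrix.det_fin_two, h10, Complex.mul_conj]
  simp [Complex.mul_im, him0, him1]

lemma det_XXh (Y : Matrix (Fin 2) (Fin 2) ℂ) :
    (Y * Yᴴ).det = ((Complex.normSq Y.det : ℝ) : ℂ) := by
  rw [Matrix.det_mul, Matrix.det_conjTranspose, Complex.star_def, Complex.mul_conj]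

lemma good_XXh (Y : Matrix (Fin 2) (Fin 2) ℂ) : Good (Y * Yᴴ) := by
  have herm : (Y * Yᴴ).IsHermitian := Matrix.isHermitian_mul_conjTranspose_self Y
  have h10 : (Y * Yᴴ) 1 0 = (starRingEnd ℂ) ((Y * Yᴴ) 0 1) := by
    rw [← Complex.star_def]; exact (herm.apply 1 0).symm
  have h00 : (Y * Yᴴ) 0 0 = ((Complex.normSq (Y 0 0) + Complex.normSq (Y 0 1) : ℝ) : ℂ) := by
    simp [Matrix.mul_apply, Matrix.conjTranspose_apply, Fin.sum_univ_two, Complex.mul_conj]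
  have h11 : (Y * Yᴴ) 1 1 = ((Complex.normSq (Y 1 0) + Complex.normSq (Y 1 1) : ℝ) : ℂ) := by
    simp [Matrix.mul_apply, Matrix.conjTranspose_apply, Fin.sum_univ_two, Complex.mul_conj]
  have him0 : ((Y * Yᴴ) 0 0).im = 0 := by rw [h00]; simp
  have him1 : ((Y * Yᴴ) 1 1).im = 0 := by rw [h11]; simp
  refine ⟨h10, him0, him1, ?_, ?_, ?_⟩
  · rw [h00]; simp only [Complex.ofReal_re]; exact add_nonneg (Complex.normSq_nonneg _) (Complex.normSq_nonneg _)
  · rw [h11]; simp only [Complex.ofReal_re]; exact add_nonneg (Complex.normSq_nonneg _) (Complex.normSq_nonneg _)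
  · have hre := det_re_of h10 him0 him1
    have hd : (Y * Yᴴ).det.re = Complex.normSq Y.det := by rw [det_XXh]; simp
    nlinarith [Complex.normSq_nonneg Y.det]

lemma core_sq (a1 b1 a2 b2 : ℝ) (c1 c2 : ℂ)
    (ha1 : 0 ≤ a1) (hb1 : 0 ≤ b1) (ha2 : 0 ≤ a2) (hb2 : 0 ≤ b2)
    (h1 : Complex.normSq c1 ≤ a1 * b1) (h2 : Complex.normSq c2 ≤ a2 * b2) :
    (Real.sqrt (a1 * b1 - Complex.normSq c1) + Real.sqrt (a2 * b2 - Complex.normSq c2)) ^ 2 ≤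
      (a1 + a2) * (b1 + b2) - Complex.normSq (c1 + c2) := by
  set s1 := Real.sqrt (a1 * b1 - Complex.normSq c1) with hs1def
  set s2 := Real.sqrt (a2 * b2 - Complex.normSq c2) with hs2def
  set q1 := Real.sqrt (Complex.normSq c1) with hq1def
  set q2 := Real.sqrt (Complex.normSq c2) with hq2def
  have hn1 : (0:ℝ) ≤ Complex.normSq c1 := Complex.normSq_nonneg _
  have hn2 : (0:ℝ) ≤ Complex.normSq c2 := Complex.normSq_nonneg _
  have e1 : s1 ^ 2 = a1 * b1 - Complex.normSq c1 := Real.sq_sqrt (by linarith)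
  have e2 : s2 ^ 2 = a2 * b2 - Complex.normSq c2 := Real.sq_sqrt (by linarith)
  have f1 : q1 ^ 2 = Complex.normSq c1 := Real.sq_sqrt hn1
  have f2 : q2 ^ 2 = Complex.normSq c2 := Real.sq_sqrt hn2
  have hs1 : 0 ≤ s1 := Real.sqrt_nonneg _
  have hs2 : 0 ≤ s2 := Real.sqrt_nonneg _
  have hq1 : 0 ≤ q1 := Real.sqrt_nonneg _
  have hq2 : 0 ≤ q2 := Real.sqrt_nonneg _
  have hr : (c1 * (starRingEnd ℂ) c2).re ≤ q1 * q2 := by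
    calc (c1 * (starRingEnd ℂ) c2).re ≤ ‖c1 * (starRingEnd ℂ) c2‖ :=
          Complex.re_le_norm _
      _ = ‖c1‖ * ‖c2‖ := by rw [norm_mul, Complex.norm_conj]
      _ = q1 * q2 := by rw [hq1def, hq2def, Complex.norm_def, Complex.norm_def]
  have e12 : (s1 ^ 2 + q1 ^ 2) * (s2 ^ 2 + q2 ^ 2) = (a1 * b1) * (a2 * b2) := by
    rw [e1, e2, f1, f2]; ring
  have h4 : (2 * (s1 * s2 + q1 * q2)) ^ 2 ≤ (a1 * b2 + a2 * b1) ^ 2 := by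
    nlinarith [sq_nonneg (a1 * b2 - a2 * b1), sq_nonneg (s1 * q2 - s2 * q1)]
  have hM : 0 ≤ a1 * b2 + a2 * b1 := by positivity
  have hT : 2 * (s1 * s2 + q1 * q2) ≤ a1 * b2 + a2 * b1 := by
    have h5 : 0 ≤ 2 * (s1 * s2 + q1 * q2) := by positivity
    nlinarith
  rw [Complex.normSq_add]
  nlinarith [hr]

lemma good_add {A B : Matrix (Fin 2) (Fin 2) ℂ} (hA : Good A) (hB : Good B) :
    Good (A + B) ∧
      Real.sqrt A.det.re + Real.sqrt B.det.re ≤ Real.sqrt ((A + B).det.re) := by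
  obtain ⟨hA10, hAim0, hAim1, hAre0, hAre1, hAd⟩ := hA
  obtain ⟨hB10, hBim0, hBim1, hBre0, hBre1, hBd⟩ := hB
  have key := core_sq ((A 0 0).re) ((A 1 1).re) ((B 0 0).re) ((B 1 1).re)
    (A 0 1) (B 0 1) hAre0 hAre1 hBre0 hBre1 hAd hBd
  have h10 : (A + B) 1 0 = (starRingEnd ℂ) ((A + B) 0 1) := by
    simp [Matrix.add_apply, hA10, hB10, map_add]
  have him0 : ((A + B) 0 0).im = 0 := by simp [Matrix.add_apply, hAim0, hBim0]
  have him1 : ((A + B) 1 1).im = 0 := by simp [Matrix.add_apply, hAim1, hBim1]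
  have hreA : A.det.re = (A 0 0).re * (A 1 1).re - Complex.normSq (A 0 1) :=
    det_re_of hA10 hAim0 hAim1
  have hreB : B.det.re = (B 0 0).re * (B 1 1).re - Complex.normSq (B 0 1) :=
    det_re_of hB10 hBim0 hBim1
  have hreAB : (A + B).det.re =
      ((A 0 0).re + (B 0 0).re) * ((A 1 1).re + (B 1 1).re)
        - Complex.normSq (A 0 1 + B 0 1) := by
    rw [det_re_of h10 him0 him1]; simp [Matrix.add_apply]
  constructor
  · refine ⟨h10, him0, him1, ?_, ?_, ?_⟩
    · simp [Matrix.add_apply]; linarith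
    · simp [Matrix.add_apply]; linarith
    · simp only [Matrix.add_apply]
      have hsq : 0 ≤ (Real.sqrt ((A 0 0).re * (A 1 1).re - Complex.normSq (A 0 1)) +
          Real.sqrt ((B 0 0).re * (B 1 1).re - Complex.normSq (B 0 1))) ^ 2 := sq_nonneg _
      simp only [Complex.add_re]
      linarith
  · rw [hreA, hreB, hreAB]
    apply Real.le_sqrt_of_sq_le
    exact key

lemma good_sum {L : ℕ} (X : Fin L → Matrix (Fin 2) (Fin 2) ℂ) (s : Finset (Fin L)) :
    Good (∑ j ∈ s, X j * (X j)ᴴ) ∧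
      ∑ j ∈ s, ‖(X j).det‖ ≤ Real.sqrt ((∑ j ∈ s, X j * (X j)ᴴ).det.re) := by
  classical
  induction s using Finset.induction_on with
  | empty =>
    constructor
    · refine ⟨by simp, by simp, by simp, by simp, by simp, by simp⟩
    · simp [Matrix.det_fin_two]
  | @insert j s hj ih =>
    obtain ⟨ihG, ihS⟩ := ih
    have hXj : Good (X j * (X j)ᴴ) := good_XXh (X j)
    obtain ⟨hG, hS⟩ := good_add hXj ihG
    rw [Finset.sum_insert hj, Finset.sum_insert hj]
    refine ⟨hG, ?_⟩
    have habs : Real.sqrt ((X j * (X j)ᴴ).det.re) = ‖(X j).det‖ := by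
      rw [det_XXh]
      simp [Complex.norm_def]
    calc ‖(X j).det‖ + ∑ i ∈ s, ‖(X i).det‖
        ≤ Real.sqrt ((X j * (X j)ᴴ).det.re) +
            Real.sqrt ((∑ i ∈ s, X i * (X i)ᴴ).det.re) := by
          rw [habs]; linarith
      _ ≤ _ := hS

theorem stmt_2 (L : ℕ)
    (Λ : Set (Matrix (Fin 2) (Fin 2) ℂ)) (h0 : (0 : Matrix (Fin 2) (Fin 2) ℂ) ∈ Λ)
    (δ : ℝ) (hδ : 0 ≤ δ)
    (hdet : ∀ X ∈ Λ, X ≠ 0 → δ ≤ ‖X.det‖ ^ 2)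
    (d : ℕ)
    (X : Fin L → Matrix (Fin 2) (Fin 2) ℂ) (hX : ∀ i, X i ∈ Λ)
    (hne : ∃ i, X i ≠ 0)
    (hcase : (∀ i, ∃ Y ∈ Λ, X i = (1 + Complex.I) • Y) ∨
      ∃ w : Fin L → ℕ, d ≤ ∑ j, w j ∧
        ∀ j, w j = 0 ∨ (w j = 1 ∧ δ ≤ ‖(X j).det‖ ^ 2) ∨
          (w j = 2 ∧ 2 * δ ≤ ‖(X j).det‖ ^ 2)) :
    min (4 * δ) ((d : ℝ) ^ 2 * δ / 2) ≤ ‖(∑ j, X j * (X j)ᴴ).det‖ := by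
  obtain ⟨hG, hT⟩ := good_sum X Finset.univ
  set S := ∑ j, X j * (X j)ᴴ with hSdef
  set T := ∑ j, ‖(X j).det‖ with hTdef
  have hT0 : (0:ℝ) ≤ T := Finset.sum_nonneg fun j _ => norm_nonneg _
  have hSre : 0 ≤ S.det.re := by
    obtain ⟨h10, him0, him1, _, _, hlast⟩ := hG
    rw [det_re_of h10 him0 him1]; linarith
  have habs : ‖S.det‖ = S.det.re := by
    have hdetS : S.det = ((S.det.re : ℝ) : ℂ) := by
      refine Complex.ext rfl ?_
      obtain ⟨h10, him0, him1, _, _, _⟩ := hG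
      simp [det_im_of h10 him0 him1]
    rw [hdetS]
    simp [Complex.norm_real, _root_.abs_of_nonneg hSre]
  have hTsq : T ^ 2 ≤ S.det.re := by
    calc T ^ 2 ≤ Real.sqrt (S.det.re) ^ 2 := pow_le_pow_left₀ hT0 hT 2
      _ = S.det.re := Real.sq_sqrt hSre
  rw [habs]
  rcases hcase with h | ⟨w, hwd, hwj⟩
  · obtain ⟨i, hi⟩ := hne
    obtain ⟨Y, hY, hXY⟩ := h i
    have hYne : Y ≠ 0 := by
      rintro rfl; rw [smul_zero] at hXY; exact hi hXY
    have hYd : δ ≤ ‖Y.det‖ ^ 2 := hdet Y hY hYne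
    have hXidet : ‖(X i).det‖ = 2 * ‖Y.det‖ := by
      have h2 : ‖1 + Complex.I‖ ^ 2 = 2 := by
        rw [Complex.sq_norm]; simp [Complex.normSq_apply]; norm_num
      have hd : (X i).det = (1 + Complex.I) ^ (Fintype.card (Fin 2)) * Y.det := by
        rw [hXY, Matrix.det_smul]
      rw [hd, norm_mul, norm_pow, Fintype.card_fin, h2]
    have hXiT : ‖(X i).det‖ ≤ T := by
      rw [hTdef]
      exact Finset.single_le_sum (f := fun j => ‖(X j).det‖)
        (fun j _ => norm_nonneg _) (Finset.mem_univ i)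
    have h4 : 4 * δ ≤ T ^ 2 := by
      have := pow_le_pow_left₀ (norm_nonneg ((X i).det)) hXiT 2
      rw [hXidet] at this
      nlinarith [norm_nonneg Y.det]
    exact le_trans (min_le_left _ _) (by linarith)
  · set r := Real.sqrt (δ / 2) with hrdef
    have hr0 : 0 ≤ r := Real.sqrt_nonneg _
    have hr2 : r ^ 2 = δ / 2 := Real.sq_sqrt (by linarith)
    have hterm : ∀ j, (w j : ℝ) * r ≤ ‖(X j).det‖ := by
      intro j
      rcases hwj j with h0' | ⟨h1', hd1⟩ | ⟨h2', hd2⟩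
      · rw [h0']; simp [norm_nonneg]
      · rw [h1']
        refine le_of_pow_le_pow_left₀ two_ne_zero (norm_nonneg _) ?_
        rw [mul_pow]
        push_cast
        nlinarith
      · rw [h2']
        refine le_of_pow_le_pow_left₀ two_ne_zero (norm_nonneg _) ?_
        rw [mul_pow]
        push_cast
        nlinarith
    have hsum : ((∑ j, w j : ℕ) : ℝ) * r ≤ T := by
      rw [hTdef, Nat.cast_sum, Finset.sum_mul]
      exact Finset.sum_le_sum fun j _ => hterm j
    have hdr : (d : ℝ) * r ≤ T := by
      refine le_trans ?_ hsum
      have : (d : ℝ) ≤ ((∑ j, w j : ℕ) : ℝ) := Nat.cast_le.mpr hwd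
      nlinarith
    have hfin : (d : ℝ) ^ 2 * δ / 2 ≤ T ^ 2 := by
      have := pow_le_pow_left₀ (by positivity : (0:ℝ) ≤ (d:ℝ) * r) hdr 2
      rw [mul_pow, hr2] at this
      linarith
    exact le_trans (min_le_right _ _) (by linarith)
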